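/- The two-player game induced by the two-party matching-pennies election — in which player Odd chooses a nominee a_o ∈ {a₁, a₃}, player Even chooses a nominee a_e ∈ {a₂, a₄}, Odd's utility is 1 if the general-election FPTP winner equals a_o and 0 otherwise, and Even's utility is 1 if the winner equals a_e and 0 otherwise — has no pure Nash equilibrium: from every pure strategy profile, some player can strictly increase her utility by a unilateral deviation. Consequently, primary elections under FPTP with fixed tie-breaking may admit no pure-strategy Nash equilibrium. -/
import Mathlib


/-! The two-party matching-pennies election.  Candidates are `Fin 4`, with
`a₁ = 0, a₂ = 1, a₃ = 2, a₄ = 3`; the tie-breaking order `a₁ ≻ a₂ ≻ a₃ ≻ a₄`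
is the natural order on `Fin 4` (the least index wins ties). -/

open Classical in
/-- The FPTP winner with respect to the tie-breaking linear order `r`:
the `r`-least candidate among the candidates maximizing the tally `t`. -/
noncomputable def fptpWinner {A : Type*} [Fintype A] [Nonempty A]
    (r : LinearOrder A) (t : A → ℕ) : A :=
  @Finset.min' A r (Finset.univ.filter fun a => ∀ b, t b ≤ t a) (by
    obtain ⟨a, -, ha⟩ := Finset.exists_max_image (Finset.univ : Finset A) t
      ⟨Classical.arbitrary A, Finset.mem_univ _⟩
    exact ⟨a, Finset.mem_filter.mpr ⟨Finset.mem_univ _, fun b => ha b (Finset.mem_univ _)⟩⟩)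

/-- List voter `v_i` votes for whichever of the two finalists `ao, ae` appears
first on the cyclic list `(a_i, a_{i+1}, a_{i+2}, a_{i+3})` (indices mod 4). -/
def listVote (ao ae : Fin 4) (i : Fin 4) : Fin 4 :=
  if i = ao ∨ i = ae then i
  else if i + 1 = ao ∨ i + 1 = ae then i + 1
  else if i + 2 = ao ∨ i + 2 = ae then i + 2
  else i + 3

/-- General-election tally: the four list voters plus `v_odd` (who votes for
`ao`) and `v_even` (who votes for `ae`). -/
def geTally (ao ae : Fin 4) (c : Fin 4) : ℕ :=
  (Finset.univ.filter fun i : Fin 4 => listVote ao ae i = c).card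
    + (if c = ao then 1 else 0) + (if c = ae then 1 else 0)

/-- General-election FPTP winner given the finalists `ao` and `ae`. -/
noncomputable def geWinner (ao ae : Fin 4) : Fin 4 :=
  fptpWinner inferInstance (geTally ao ae)

/-- Odd's utility: 1 if the GE winner is her nominee `ao`, else 0. -/
noncomputable def uOddMP (ao ae : Fin 4) : ℚ := if geWinner ao ae = ao then 1 else 0

/-- Even's utility: 1 if the GE winner is her nominee `ae`, else 0. -/
noncomputable def uEvenMP (ao ae : Fin 4) : ℚ := if geWinner ao ae = ae then 1 else 0

lemma geWinner_eq (ao ae w : Fin 4)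
    (h : (Finset.univ.filter fun a => ∀ b, geTally ao ae b ≤ geTally ao ae a) = {w}) :
    geWinner ao ae = w := by
  unfold geWinner fptpWinner
  apply le_antisymm
  · apply Finset.min'_le
    rw [Finset.filter_congr_decidable, h]
    exact Finset.mem_singleton_self w
  · apply Finset.le_min'
    intro y hy
    rw [Finset.filter_congr_decidable, h] at hy
    exact le_of_eq (Finset.mem_singleton.mp hy).symm

lemma w01 : geWinner 0 1 = 0 := geWinner_eq 0 1 0 (by decide)
lemma w03 : geWinner 0 3 = 3 := geWinner_eq 0 3 3 (by decide)
lemma w21 : geWinner 2 1 = 1 := geWinner_eq 2 1 1 (by decide)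
lemma w23 : geWinner 2 3 = 2 := geWinner_eq 2 3 2 (by decide)

/-- the two-player game induced by the two-party matching-pennies
election, where Odd chooses `ao ∈ {a₁, a₃}` and Even chooses `ae ∈ {a₂, a₄}`,
has no pure Nash equilibrium: from every profile some player can strictly
increase her utility by a unilateral deviation. -/
theorem stmt6 :
    ¬ ∃ (ao ae : Fin 4), (ao = 0 ∨ ao = 2) ∧ (ae = 1 ∨ ae = 3) ∧
      (∀ ao' : Fin 4, (ao' = 0 ∨ ao' = 2) → uOddMP ao' ae ≤ uOddMP ao ae) ∧
      (∀ ae' : Fin 4, (ae' = 1 ∨ ae' = 3) → uEvenMP ao ae' ≤ uEvenMP ao ae) := by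

  rintro ⟨ao, ae, (rfl|rfl), (rfl|rfl), hO, hE⟩
  · have := hE 3 (Or.inr rfl)
    simp [uEvenMP, w01, w03] at this; exact absurd this (by norm_num)
  · have := hO 2 (Or.inr rfl)
    simp [uOddMP, w03, w23] at this; exact absurd this (by norm_num)
  · have := hO 0 (Or.inl rfl)
    simp [uOddMP, w21, w01] at this; exact absurd this (by norm_num)
  · have := hE 1 (Or.inl rfl)
    simp [uEvenMP, w23, w21] at this; exact absurd this (by norm_num)
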